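/- Let 𝓜 : ℝ × S² → ℝ be a continuous function which is differentiable in its first variable, whose partial derivative ∂_u 𝓜 is continuous on ℝ × S², and which satisfies ∂_u 𝓜(u,ω) ≤ 0 for all (u,ω) ∈ ℝ × S². Define the modified Bondi energy-momentum 𝐦_ν(u) = (1/(4π)) ∫_{S²} 𝓜(u,ω) n^ν(ω) dS(ω) for ν = 0,1,2,3. Then the function u ↦ 𝐦₀(u) − √(𝐦₁(u)² + 𝐦₂(u)² + 𝐦₃(u)²) is nonincreasing (antitone) on ℝ. -/
import Mathlib

open MeasureTheory Real Metric

/-- The unit sphere S² in Euclidean ℝ³. -/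
abbrev Sphere2 : Type := Metric.sphere (0 : EuclideanSpace ℝ (Fin 3)) 1

/-- The standard surface measure on S² (total measure 4π). -/
noncomputable def sphereMeasure : Measure Sphere2 :=
  (volume : Measure (EuclideanSpace ℝ (Fin 3))).toSphere

/-- The i-th Cartesian coordinate function on S², i = 0,1,2. -/
def sphereCoord (i : Fin 3) (ω : Sphere2) : ℝ := (ω : EuclideanSpace ℝ (Fin 3)) i

instance : IsFiniteMeasure sphereMeasure :=
  inferInstanceAs (IsFiniteMeasure (volume : Measure (EuclideanSpace ℝ (Fin 3))).toSphere)

lemma sphere2_integrable_of_continuous {F : Type*} [NormedAddCommGroup F]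
    {g : Sphere2 → F} (hg : Continuous g) : Integrable g sphereMeasure :=
  hg.integrable_of_hasCompactSupport (HasCompactSupport.of_compactSpace g)

/-- Monotonicity (6.3) of the modified Bondi energy: if the modified mass aspect
`𝓜` has nonpositive `u`-derivative, then the modified Bondi energy
`𝐦₀ − √(𝐦₁² + 𝐦₂² + 𝐦₃²)` is nonincreasing. -/
theorem modified_bondi_energy_nonincreasing
    (𝓜 𝓜' : ℝ × Sphere2 → ℝ)
    (h𝓜 : Continuous 𝓜)
    (h𝓜' : Continuous 𝓜')
    (hderiv : ∀ (u : ℝ) (ω : Sphere2),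
      HasDerivAt (fun t : ℝ => 𝓜 (t, ω)) (𝓜' (u, ω)) u)
    (hnonpos : ∀ x : ℝ × Sphere2, 𝓜' x ≤ 0) :
    Antitone (fun u : ℝ =>
      (1 / (4 * π)) * (∫ ω : Sphere2, 𝓜 (u, ω) ∂sphereMeasure) -
        Real.sqrt
          (((1 / (4 * π)) * ∫ ω : Sphere2, 𝓜 (u, ω) * sphereCoord 0 ω ∂sphereMeasure) ^ 2 +
           ((1 / (4 * π)) * ∫ ω : Sphere2, 𝓜 (u, ω) * sphereCoord 1 ω ∂sphereMeasure) ^ 2 +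
           ((1 / (4 * π)) * ∫ ω : Sphere2, 𝓜 (u, ω) * sphereCoord 2 ω ∂sphereMeasure) ^ 2)) := by
  set c : ℝ := 1 / (4 * π) with hc
  have hcpos : 0 ≤ c := by positivity
  -- pointwise monotonicity in u
  have hmono : ∀ ω : Sphere2, Antitone fun t : ℝ => 𝓜 (t, ω) := by
    intro ω
    apply antitone_of_deriv_nonpos
    · exact fun t => (hderiv t ω).differentiableAt
    · intro t
      rw [(hderiv t ω).deriv]
      exact hnonpos _
  -- continuity / integrability of the slices
  have hcont : ∀ t : ℝ, Continuous fun ω : Sphere2 => 𝓜 (t, ω) :=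
    fun t => h𝓜.comp (Continuous.prodMk_right t)
  have hint : ∀ t : ℝ, Integrable (fun ω : Sphere2 => 𝓜 (t, ω)) sphereMeasure :=
    fun t => sphere2_integrable_of_continuous (hcont t)
  -- the vector-valued integral
  set V : ℝ → EuclideanSpace ℝ (Fin 3) :=
    fun t => ∫ ω : Sphere2, 𝓜 (t, ω) • (ω : EuclideanSpace ℝ (Fin 3)) ∂sphereMeasure with hV
  have hVint : ∀ t : ℝ, Integrable
      (fun ω : Sphere2 => 𝓜 (t, ω) • (ω : EuclideanSpace ℝ (Fin 3))) sphereMeasure :=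
    fun t => sphere2_integrable_of_continuous ((hcont t).smul continuous_subtype_val)
  have hcomp : ∀ (t : ℝ) (i : Fin 3),
      V t i = ∫ ω : Sphere2, 𝓜 (t, ω) * sphereCoord i ω ∂sphereMeasure := by
    intro t i
    have h := (ContinuousLinearMap.integral_comp_comm
      (EuclideanSpace.proj (𝕜 := ℝ) i) (hVint t)).symm
    simpa [sphereCoord, smul_eq_mul] using h
  -- the sqrt expression is the norm of c • V t
  have hnorm : ∀ t : ℝ,
      Real.sqrt ((c * ∫ ω : Sphere2, 𝓜 (t, ω) * sphereCoord 0 ω ∂sphereMeasure) ^ 2 +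
        (c * ∫ ω : Sphere2, 𝓜 (t, ω) * sphereCoord 1 ω ∂sphereMeasure) ^ 2 +
        (c * ∫ ω : Sphere2, 𝓜 (t, ω) * sphereCoord 2 ω ∂sphereMeasure) ^ 2) = ‖c • V t‖ := by
    intro t
    rw [EuclideanSpace.norm_eq]
    congr 1
    rw [Fin.sum_univ_three]
    simp [PiLp.smul_apply, smul_eq_mul, Real.norm_eq_abs, sq_abs, mul_pow,
      hcomp t 0, hcomp t 1, hcomp t 2, add_assoc]
  intro u v huv
  simp only
  rw [hnorm u, hnorm v]
  -- key inequality: ‖V u - V v‖ ≤ ∫ 𝓜 u - ∫ 𝓜 v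
  have hdiff : V u - V v = ∫ ω : Sphere2,
      (𝓜 (u, ω) - 𝓜 (v, ω)) • (ω : EuclideanSpace ℝ (Fin 3)) ∂sphereMeasure := by
    rw [hV]
    rw [← integral_sub (hVint u) (hVint v)]
    congr 1
    ext ω
    rw [sub_smul]
  have hkey : ‖V u - V v‖ ≤
      (∫ ω : Sphere2, 𝓜 (u, ω) ∂sphereMeasure) - ∫ ω : Sphere2, 𝓜 (v, ω) ∂sphereMeasure := by
    rw [hdiff, ← integral_sub (hint u) (hint v)]
    calc ‖∫ ω : Sphere2, (𝓜 (u, ω) - 𝓜 (v, ω)) • (ω : EuclideanSpace ℝ (Fin 3)) ∂sphereMeasure‖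
        ≤ ∫ ω : Sphere2, ‖(𝓜 (u, ω) - 𝓜 (v, ω)) • (ω : EuclideanSpace ℝ (Fin 3))‖ ∂sphereMeasure :=
          norm_integral_le_integral_norm _
      _ = ∫ ω : Sphere2, (𝓜 (u, ω) - 𝓜 (v, ω)) ∂sphereMeasure := by
          apply integral_congr_ae
          filter_upwards with ω
          have hω : ‖(ω : EuclideanSpace ℝ (Fin 3))‖ = 1 := by
            simpa using mem_sphere_zero_iff_norm.mp ω.2
          have hle : 0 ≤ 𝓜 (u, ω) - 𝓜 (v, ω) := sub_nonneg.mpr (hmono ω huv)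
          rw [norm_smul, hω, mul_one, Real.norm_eq_abs, abs_of_nonneg hle]
  -- triangle inequality and conclusion
  have htri : ‖c • V u‖ - ‖c • V v‖ ≤ ‖c • V u - c • V v‖ := norm_sub_norm_le _ _
  have hsc : ‖c • V u - c • V v‖ = c * ‖V u - V v‖ := by
    rw [← smul_sub, norm_smul, Real.norm_eq_abs, abs_of_nonneg hcpos]
  have hmul : c * ‖V u - V v‖ ≤
      c * ((∫ ω : Sphere2, 𝓜 (u, ω) ∂sphereMeasure) - ∫ ω : Sphere2, 𝓜 (v, ω) ∂sphereMeasure) :=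
    mul_le_mul_of_nonneg_left hkey hcpos
  nlinarith [htri, hsc, hmul]
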